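/- Let V and W be complex vector spaces. If α₁, α₂, α₃ ∈ V are three vectors, any two of which are linearly independent (pairwise linearly independent), and β₁, β₂, β₃ ∈ W are nonzero vectors that are not all pairwise proportional, then the three tensors α₁ ⊗ β₁, α₂ ⊗ β₂, α₃ ⊗ β₃ are linearly independent in V ⊗ W. -/
import Mathlib

open TensorProduct

private lemma li_swap {V : Type*} [AddCommGroup V] [Module ℂ V] {x y : V}
    (h : LinearIndependent ℂ ![x, y]) : LinearIndependent ℂ ![y, x] := by
  have h2 := h.comp (Equiv.swap (0 : Fin 2) 1) (Equiv.injective _)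
  have : ![x, y] ∘ (Equiv.swap (0 : Fin 2) 1) = ![y, x] := by
    ext i; fin_cases i <;> simp [Equiv.swap_apply_def]
  rwa [this] at h2

private lemma dual_pair {V : Type*} [AddCommGroup V] [Module ℂ V] {x y : V}
    (h : LinearIndependent ℂ ![x, y]) : ∃ f : V →ₗ[ℂ] ℂ, f x = 1 ∧ f y = 0 := by
  have hx : x ∉ Submodule.span ℂ {y} := by
    rw [Submodule.mem_span_singleton]
    rintro ⟨a, ha⟩
    exact (linearIndependent_fin2.mp h).2 a ha
  obtain ⟨f, hfx, hfmap⟩ := Submodule.exists_dual_map_eq_bot_of_notMem hx inferInstance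
  have hfy : f y = 0 := by
    have : f y ∈ (Submodule.span ℂ {y}).map f :=
      Submodule.mem_map_of_mem (Submodule.mem_span_singleton_self y)
    rwa [hfmap, Submodule.mem_bot] at this
  refine ⟨(f x)⁻¹ • f, ?_, ?_⟩ <;>
    simp [hfy, inv_mul_cancel₀ hfx]

theorem stmt_0 {V W : Type*} [AddCommGroup V] [Module ℂ V]
    [AddCommGroup W] [Module ℂ W]
    (a1 a2 a3 : V) (b1 b2 b3 : W)
    (ha12 : LinearIndependent ℂ ![a1, a2])
    (ha13 : LinearIndependent ℂ ![a1, a3])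
    (ha23 : LinearIndependent ℂ ![a2, a3])
    (hb1 : b1 ≠ 0) (hb2 : b2 ≠ 0) (hb3 : b3 ≠ 0)
    (hb : LinearIndependent ℂ ![b1, b2] ∨ LinearIndependent ℂ ![b1, b3] ∨
      LinearIndependent ℂ ![b2, b3]) :
    LinearIndependent ℂ ![a1 ⊗ₜ[ℂ] b1, a2 ⊗ₜ[ℂ] b2, a3 ⊗ₜ[ℂ] b3] := by
  rw [Fintype.linearIndependent_iff]
  intro c hc
  rw [Fin.sum_univ_three] at hc
  simp only [Matrix.cons_val_zero, Matrix.cons_val_one, Matrix.head_cons,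
    Matrix.cons_val_two, Matrix.tail_cons] at hc
  -- the map applying a functional to the first factor
  set L : (V →ₗ[ℂ] ℂ) → (V ⊗[ℂ] W →ₗ[ℂ] W) :=
    fun g => (TensorProduct.lid ℂ W).toLinearMap ∘ₗ g.rTensor W with hL
  have hLapp : ∀ (g : V →ₗ[ℂ] ℂ) (a : V) (b : W), L g (a ⊗ₜ[ℂ] b) = g a • b := by
    intro g a b; simp [hL]
  obtain ⟨f1, hf1x, hf1y⟩ := dual_pair ha12
  obtain ⟨f2, hf2x, hf2y⟩ := dual_pair (li_swap ha12)
  have key : ∀ g : V →ₗ[ℂ] ℂ,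
      (c 0 * g a1) • b1 + (c 1 * g a2) • b2 + (c 2 * g a3) • b3 = 0 := by
    intro g
    have := congrArg (L g) hc
    simpa [map_add, map_smul, hLapp, smul_smul] using this
  by_cases hsp : a3 ∈ Submodule.span ℂ {a1, a2}
  · obtain ⟨s, t, hst⟩ := Submodule.mem_span_pair.mp hsp
    have hs : s ≠ 0 := by
      rintro rfl
      simp only [zero_smul, zero_add] at hst
      exact (linearIndependent_fin2.mp (li_swap ha23)).2 t hst
    have ht : t ≠ 0 := by
      rintro rfl
      simp only [zero_smul, add_zero] at hst
      exact (linearIndependent_fin2.mp (li_swap ha13)).2 s hst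
    have hf1a3 : f1 a3 = s := by rw [← hst]; simp [hf1x, hf1y]
    have hf2a3 : f2 a3 = t := by rw [← hst]; simp [hf2x, hf2y]
    have eq1 : c 0 • b1 + (c 2 * s) • b3 = 0 := by
      have := key f1; rwa [hf1x, hf1y, hf1a3, mul_one, mul_zero, zero_smul, add_zero] at this
    have eq2 : c 1 • b2 + (c 2 * t) • b3 = 0 := by
      have := key f2; rwa [hf2x, hf2y, hf2a3, mul_one, mul_zero, zero_smul, zero_add] at this
    have hc2 : c 2 = 0 := by
      by_contra hc2
      have h1 : b1 = (-(c 2 * s) * (c 0)⁻¹) • b3 := by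
        have hc0 : c 0 ≠ 0 := by
          rintro h0
          rw [h0, zero_smul, zero_add] at eq1
          exact hb3 ((smul_eq_zero_iff_right (mul_ne_zero hc2 hs)).mp eq1)
        have : c 0 • b1 = (-(c 2 * s)) • b3 := by
          rw [neg_smul, eq_neg_iff_add_eq_zero]; exact eq1
        calc b1 = (c 0)⁻¹ • (c 0 • b1) := by rw [smul_smul, inv_mul_cancel₀ hc0, one_smul]
          _ = (-(c 2 * s) * (c 0)⁻¹) • b3 := by rw [this, smul_smul, mul_comm]
      have h2 : b2 = (-(c 2 * t) * (c 1)⁻¹) • b3 := by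
        have hc1 : c 1 ≠ 0 := by
          rintro h0
          rw [h0, zero_smul, zero_add] at eq2
          exact hb3 ((smul_eq_zero_iff_right (mul_ne_zero hc2 ht)).mp eq2)
        have : c 1 • b2 = (-(c 2 * t)) • b3 := by
          rw [neg_smul, eq_neg_iff_add_eq_zero]; exact eq2
        calc b2 = (c 1)⁻¹ • (c 1 • b2) := by rw [smul_smul, inv_mul_cancel₀ hc1, one_smul]
          _ = (-(c 2 * t) * (c 1)⁻¹) • b3 := by rw [this, smul_smul, mul_comm]
      set lam := -(c 2 * s) * (c 0)⁻¹ with hlam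
      set mu := -(c 2 * t) * (c 1)⁻¹ with hmu
      have hlamne : lam ≠ 0 := by
        rintro h0; rw [h0, zero_smul] at h1; exact hb1 h1
      have hmune : mu ≠ 0 := by
        rintro h0; rw [h0, zero_smul] at h2; exact hb2 h2
      rcases hb with h | h | h
      · exact (linearIndependent_fin2.mp h).2 (lam * mu⁻¹)
          (by simp only [Matrix.cons_val_one, Matrix.head_cons, Matrix.cons_val_zero, h1, h2, smul_smul, mul_assoc, inv_mul_cancel₀ hmune, mul_one])
      · exact (linearIndependent_fin2.mp h).2 lam h1.symm
      · exact (linearIndependent_fin2.mp h).2 mu h2.symm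
    have hc0 : c 0 = 0 := by
      rw [hc2, zero_mul, zero_smul, add_zero] at eq1
      exact (smul_eq_zero_iff_left hb1).mp eq1
    have hc1 : c 1 = 0 := by
      rw [hc2, zero_mul, zero_smul, add_zero] at eq2
      exact (smul_eq_zero_iff_left hb2).mp eq2
    intro i; fin_cases i <;> assumption
  · obtain ⟨f3, hf3ne, hf3map⟩ := Submodule.exists_dual_map_eq_bot_of_notMem hsp inferInstance
    have hf3a1 : f3 a1 = 0 := by
      have : f3 a1 ∈ (Submodule.span ℂ {a1, a2}).map f3 :=
        Submodule.mem_map_of_mem (Submodule.subset_span (by simp))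
      rwa [hf3map, Submodule.mem_bot] at this
    have hf3a2 : f3 a2 = 0 := by
      have : f3 a2 ∈ (Submodule.span ℂ {a1, a2}).map f3 :=
        Submodule.mem_map_of_mem (Submodule.subset_span (by simp))
      rwa [hf3map, Submodule.mem_bot] at this
    have hc2 : c 2 = 0 := by
      have := key f3
      rw [hf3a1, hf3a2, mul_zero, mul_zero, zero_smul, zero_smul, zero_add, zero_add] at this
      rcases mul_eq_zero.mp ((smul_eq_zero_iff_left hb3).mp this) with h | h
      · exact h
      · exact absurd h hf3ne
    have hc0 : c 0 = 0 := by
      have := key f1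
      rw [hf1x, hf1y, hc2, mul_one, mul_zero, zero_mul, zero_smul, zero_smul,
        add_zero, add_zero] at this
      exact (smul_eq_zero_iff_left hb1).mp this
    have hc1 : c 1 = 0 := by
      have := key f2
      rw [hf2x, hf2y, hc2, mul_one, mul_zero, zero_mul, zero_smul, zero_smul,
        add_zero, zero_add] at this
      exact (smul_eq_zero_iff_left hb2).mp this
    intro i; fin_cases i <;> assumption
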